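/- Let b ≥ 2, and let u be a formal Laurent series in x^{1/q} over a field L of characteristic zero, with valuation α and leading coefficient λ, where M denotes the substitution x ↦ x^b. If λ ≠ 1, then the equation M v = u·v has no nonzero solution v among Puiseux series over L. If λ = 1 and α/(b−1) is an admissible exponent, then there is a unique Puiseux series solution v with valuation α/(b−1) and leading coefficient 1, and the full solution space of M v = u v in Puiseux series over L is the one-dimensional L-span of v. -/

import Mathlib

/-- The Mahler operator `x ↦ x^b` on Hahn series with rational exponents: it rescales the
exponents by `b`. -/
noncomputable def mahlerHahn (L : Type*) [Field L] (b : ℕ) (hb : 0 < b) :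
    HahnSeries ℚ L →+* HahnSeries ℚ L :=
  HahnSeries.embDomainRingHom (AddMonoidHom.mulLeft (b : ℚ))
    (fun x y h => by
      have hb' : (b : ℚ) ≠ 0 := by positivity
      simpa [AddMonoidHom.coe_mulLeft] using mul_left_cancel₀ hb' h)
    (fun g g' => by
      have hb' : (0 : ℚ) < b := by positivity
      simpa [AddMonoidHom.coe_mulLeft] using mul_le_mul_iff_of_pos_left hb')

/-- A Hahn series over `ℚ` is a Puiseux series if its support has a common denominator. -/
def IsPuiseux {L : Type*} [Field L] (f : HahnSeries ℚ L) : Prop :=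
  ∃ q : ℕ, 0 < q ∧ ∀ e ∈ f.support, ∃ m : ℤ, e = (m : ℚ) / q

section Aux

variable {L : Type*} [Field L]

lemma mahler_coeff_mul {b : ℕ} (hb : 0 < b) (v : HahnSeries ℚ L) (e : ℚ) :
    (mahlerHahn L b hb v).coeff ((b : ℚ) * e) = v.coeff e :=
  HahnSeries.embDomain_coeff

lemma mahler_coeff {b : ℕ} (hb : 0 < b) (v : HahnSeries ℚ L) (e : ℚ) :
    (mahlerHahn L b hb v).coeff e = v.coeff (e / b) := by
  have hb' : (b : ℚ) ≠ 0 := by positivity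
  have h : e = (b : ℚ) * (e / b) := by field_simp
  conv_lhs => rw [h, mahler_coeff_mul]

lemma order_eq_of_coeffs {x : HahnSeries ℚ L} {g : ℚ} (h1 : x.coeff g ≠ 0)
    (h2 : ∀ e < g, x.coeff e = 0) : x.order = g := by
  have hx : x ≠ 0 := fun h => h1 (by simp [h])
  refine le_antisymm (HahnSeries.order_le_of_coeff_ne_zero h1) ?_
  by_contra h
  push_neg at h
  exact (mt HahnSeries.coeff_order_eq_zero.mp hx) (h2 _ h)

lemma mahler_order {b : ℕ} (hb : 0 < b) {v : HahnSeries ℚ L} (hv : v ≠ 0) :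
    (mahlerHahn L b hb v).order = (b : ℚ) * v.order := by
  have hb' : (0 : ℚ) < b := by positivity
  apply order_eq_of_coeffs
  · rw [mahler_coeff_mul]
    exact (mt HahnSeries.coeff_order_eq_zero.mp hv)
  · intro e he
    rw [mahler_coeff]
    apply HahnSeries.coeff_eq_zero_of_lt_order
    rw [div_lt_iff₀ hb', mul_comm]
    exact he

lemma mahler_smul {b : ℕ} (hb : 0 < b) (c : L) (v : HahnSeries ℚ L) :
    mahlerHahn L b hb (c • v) = c • mahlerHahn L b hb v := by
  ext e
  rw [mahler_coeff, HahnSeries.coeff_smul, HahnSeries.coeff_smul, mahler_coeff]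

/-- Key structural lemma about nonzero solutions. -/
lemma sol_order {b : ℕ} (hb : 2 ≤ b) {u v : HahnSeries ℚ L} (hu : u ≠ 0) (hv : v ≠ 0)
    (heq : mahlerHahn L b (lt_of_lt_of_le two_pos hb) v = u * v) :
    v.order = u.order / ((b : ℚ) - 1) ∧ u.leadingCoeff = 1 := by
  have hb1 : ((b : ℚ) - 1) ≠ 0 := by
    have : (2 : ℚ) ≤ b := by exact_mod_cast hb
    linarith
  have h1 : (b : ℚ) * v.order = u.order + v.order := by
    rw [← mahler_order (b := b) (by omega) hv, heq, HahnSeries.order_mul hu hv]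
  have horder : v.order = u.order / ((b : ℚ) - 1) := by
    rw [eq_div_iff hb1]
    linarith
  refine ⟨horder, ?_⟩
  have h2 : (mahlerHahn L b (by omega : 0 < b) v).coeff (u.order + v.order) = v.leadingCoeff := by
    rw [← h1, mahler_coeff_mul, HahnSeries.leadingCoeff_eq]
  have h3 : (u * v).coeff (u.order + v.order) = u.leadingCoeff * v.leadingCoeff :=
    HahnSeries.coeff_mul_order_add_order u v
  rw [heq, h3] at h2
  have hvl : v.leadingCoeff ≠ 0 := HahnSeries.leadingCoeff_ne_zero.mpr hv
  have h4 : u.leadingCoeff * v.leadingCoeff = 1 * v.leadingCoeff := by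
    rw [one_mul]; exact h2
  exact mul_right_cancel₀ hvl h4

end Aux

/-- The coefficient recursion for the canonical solution. -/
noncomputable def mahlerSeq {L : Type*} [Field L] (b : ℕ) (hb : 2 ≤ b) (c : ℕ → L) : ℕ → L
  | 0 => 1
  | n + 1 =>
    (if b ∣ (n + 1) then mahlerSeq b hb c ((n + 1) / b) else 0)
      - ∑ k ∈ (Finset.range (n + 1)).attach, c (n + 1 - k.1) * mahlerSeq b hb c k.1
  termination_by n => n
  decreasing_by
  · exact Nat.div_lt_self (Nat.succ_pos n) (by omega)
  · have := k.2
    simp only [Finset.mem_range] at this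
    omega

lemma mahlerSeq_zero {L : Type*} [Field L] (b : ℕ) (hb : 2 ≤ b) (c : ℕ → L) :
    mahlerSeq b hb c 0 = 1 := by
  rw [mahlerSeq]

lemma mahlerSeq_succ {L : Type*} [Field L] (b : ℕ) (hb : 2 ≤ b) (c : ℕ → L) (n : ℕ) :
    mahlerSeq b hb c (n + 1) =
      (if b ∣ (n + 1) then mahlerSeq b hb c ((n + 1) / b) else 0)
        - ∑ k ∈ Finset.range (n + 1), c (n + 1 - k) * mahlerSeq b hb c k := by
  rw [mahlerSeq, Finset.sum_attach (Finset.range (n + 1)) (fun k => c (n + 1 - k) * mahlerSeq b hb c k)]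

lemma mahlerSeq_spec {L : Type*} [Field L] (b : ℕ) (hb : 2 ≤ b) (c : ℕ → L)
    (hc0 : c 0 = 1) (n : ℕ) :
    (if b ∣ n then mahlerSeq b hb c (n / b) else 0)
      = ∑ k ∈ Finset.range (n + 1), c (n - k) * mahlerSeq b hb c k := by
  cases n with
  | zero => simp [mahlerSeq_zero, hc0]
  | succ n =>
    rw [Finset.sum_range_succ, Nat.sub_self, hc0, one_mul, mahlerSeq_succ b hb c n]
    ring

open Classical in
/-- The Hahn series with coefficients `a n` at exponents `β + n / Q`. -/
noncomputable def hahnOfSeq {L : Type*} [Field L] (β : ℚ) (Q : ℕ) (hQ : 0 < Q) (a : ℕ → L) :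
    HahnSeries ℚ L where
  coeff e := if h : ∃ n : ℕ, e = β + (n : ℚ) / Q then a (Nat.find h) else 0
  isPWO_support' := by
    have hQ' : (0 : ℚ) < Q := by positivity
    have hmono : Monotone (fun n : ℕ => β + (n : ℚ) / Q) := by
      intro n m hnm
      have h1 : (n : ℚ) ≤ m := by exact_mod_cast hnm
      have h2 : (n : ℚ) / Q ≤ (m : ℚ) / Q := by gcongr
      linarith
    have h1 : (Set.univ : Set ℕ).IsPWO := ((Set.isWF_univ_iff).2 (inferInstance : WellFoundedLT ℕ)).isPWO
    have h2 := h1.image_of_monotone hmono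
    apply h2.mono
    intro e he
    simp only [Function.mem_support, ne_eq] at he
    by_cases h : ∃ n : ℕ, e = β + (n : ℚ) / Q
    · obtain ⟨n, rfl⟩ := h
      exact ⟨n, Set.mem_univ n, rfl⟩
    · exact absurd (dif_neg h) he

open Classical in
lemma hahnOfSeq_coeff {L : Type*} [Field L] (β : ℚ) (Q : ℕ) (hQ : 0 < Q) (a : ℕ → L) (n : ℕ) :
    (hahnOfSeq β Q hQ a).coeff (β + (n : ℚ) / Q) = a n := by
  have hQ' : (Q : ℚ) ≠ 0 := by positivity
  have h : ∃ k : ℕ, β + (n : ℚ) / Q = β + (k : ℚ) / Q := ⟨n, rfl⟩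
  show (if h : ∃ k : ℕ, β + (n : ℚ) / Q = β + (k : ℚ) / Q then a (Nat.find h) else 0) = a n
  rw [dif_pos h]
  congr 1
  have key : ∀ k : ℕ, (β + (n : ℚ) / Q = β + (k : ℚ) / Q) → k = n := by
    intro k hk
    have h1 : (n : ℚ) / Q = (k : ℚ) / Q := by linarith
    have h2 : (n : ℚ) = (k : ℚ) := by
      field_simp at h1
      exact_mod_cast h1
    exact_mod_cast h2.symm
  exact key _ (Nat.find_spec h)

open Classical in
lemma hahnOfSeq_coeff_ne {L : Type*} [Field L] (β : ℚ) (Q : ℕ) (hQ : 0 < Q) (a : ℕ → L)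
    {e : ℚ} (he : ∀ n : ℕ, e ≠ β + (n : ℚ) / Q) :
    (hahnOfSeq β Q hQ a).coeff e = 0 := by
  show (if h : ∃ k : ℕ, e = β + (k : ℚ) / Q then a (Nat.find h) else 0) = 0
  rw [dif_neg]
  rintro ⟨k, hk⟩
  exact he k hk


/-- Let `b ≥ 2` and `u` a nonzero Puiseux series over a field `L` of
characteristic zero, with valuation `α = u.order` and leading coefficient `λ`.  If
`λ ≠ 1`, then `M v = u·v` has no nonzero Puiseux series solution `v`.  If `λ = 1` (and
`α/(b−1)` is an admissible exponent, automatic here), then there is a unique Puiseux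
series solution `v` with valuation `α/(b−1)` and leading coefficient `1`, and the full
solution space of `M v = u·v` among Puiseux series is the one-dimensional `L`-span
of `v`. -/
theorem first_order_mahler_puiseux_solutions
    {L : Type*} [Field L] [CharZero L] (b : ℕ) (hb : 2 ≤ b)
    (u : HahnSeries ℚ L) (hu : u ≠ 0) (hpu : IsPuiseux u) :
    (u.leadingCoeff ≠ 1 →
      ∀ v : HahnSeries ℚ L, IsPuiseux v →
        mahlerHahn L b (by omega) v = u * v → v = 0) ∧
    (u.leadingCoeff = 1 →
      (∃ m : ℤ, ∃ q : ℕ, 0 < q ∧ u.order / ((b : ℚ) - 1) = (m : ℚ) / q) →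
      ∃ v : HahnSeries ℚ L, IsPuiseux v ∧
        mahlerHahn L b (by omega) v = u * v ∧
        v.order = u.order / ((b : ℚ) - 1) ∧ v.leadingCoeff = 1 ∧
        (∀ w : HahnSeries ℚ L, IsPuiseux w →
          mahlerHahn L b (by omega) w = u * w →
          w.order = u.order / ((b : ℚ) - 1) → w.leadingCoeff = 1 → w = v) ∧
        (∀ w : HahnSeries ℚ L, IsPuiseux w →
          mahlerHahn L b (by omega) w = u * w → ∃ c : L, w = c • v)) := by
  have hb0 : 0 < b := by omega
  constructor
  · intro hlc v _ heq
    by_contra hv0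
    exact hlc (sol_order hb hu hv0 heq).2
  · intro hlc hadm
    obtain ⟨m0, q0, hq0, hβeq⟩ := hadm
    obtain ⟨q1, hq1, hq1s⟩ := hpu
    set α := u.order with hα
    set β := α / ((b : ℚ) - 1) with hβ
    set Q := q1 * q0 with hQdef
    have hQ : 0 < Q := Nat.mul_pos hq1 hq0
    have hQ' : (0 : ℚ) < Q := by positivity
    have hQ0 : (Q : ℚ) ≠ 0 := ne_of_gt hQ'
    have hq1' : (q1 : ℚ) ≠ 0 := by positivity
    have hq0' : (q0 : ℚ) ≠ 0 := by positivity
    have hb1 : ((b : ℚ) - 1) ≠ 0 := by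
      have : (2 : ℚ) ≤ b := by exact_mod_cast hb
      linarith
    have hbQ : ((b : ℚ)) ≠ 0 := by positivity
    have hαβ : α + β = (b : ℚ) * β := by
      have h := div_mul_cancel₀ α hb1
      have h2 : β * (b : ℚ) - β = α := by rw [← h]; ring
      linarith
    obtain ⟨mα, hmα⟩ : ∃ mα : ℤ, α = (mα : ℚ) / q1 :=
      hq1s α (by rw [HahnSeries.mem_support]; exact (mt HahnSeries.coeff_order_eq_zero.mp hu))
    have hsupp_u : ∀ e : ℚ, u.coeff e ≠ 0 → ∃ n : ℕ, e = α + (n : ℚ) / Q := by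
      intro e he
      obtain ⟨me, hme⟩ := hq1s e (by rw [HahnSeries.mem_support]; exact he)
      have hle : α ≤ e := HahnSeries.order_le_of_coeff_ne_zero he
      have hmm : mα ≤ me := by
        rw [hmα, hme] at hle
        have hq1p : (0 : ℚ) < q1 := by positivity
        have h1 : (mα : ℚ) ≤ me := by
          calc (mα : ℚ) = ((mα : ℚ) / q1) * q1 := by field_simp
          _ ≤ ((me : ℚ) / q1) * q1 := by gcongr
          _ = me := by field_simp
        exact_mod_cast h1
      refine ⟨((me - mα) * q0).toNat, ?_⟩
      have hnn : (0 : ℤ) ≤ (me - mα) * (q0 : ℤ) :=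
        mul_nonneg (sub_nonneg.2 hmm) (Int.natCast_nonneg q0)
      have h9 : ((((me - mα) * (q0 : ℤ)).toNat : ℕ) : ℤ) = (me - mα) * q0 :=
        Int.toNat_of_nonneg hnn
      have htn : ((((me - mα) * (q0 : ℤ)).toNat : ℕ) : ℚ) = ((me : ℚ) - mα) * q0 := by
        calc ((((me - mα) * (q0 : ℤ)).toNat : ℕ) : ℚ)
            = ((((((me - mα) * (q0 : ℤ)).toNat : ℕ) : ℤ)) : ℚ) := by push_cast; ring
          _ = ((((me - mα) * (q0 : ℤ)) : ℤ) : ℚ) := by rw [h9]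
          _ = ((me : ℚ) - mα) * q0 := by push_cast; ring
      rw [hme, hmα, htn, hQdef]
      push_cast
      field_simp
      ring
    obtain ⟨M0, hM0⟩ : ∃ M0 : ℤ, β = (M0 : ℚ) / Q := by
      refine ⟨m0 * q1, ?_⟩
      rw [hβeq, hQdef]
      push_cast
      field_simp
    set c : ℕ → L := fun n => u.coeff (α + (n : ℚ) / Q) with hc
    have hc0 : c 0 = 1 := by
      simp only [hc, Nat.cast_zero, zero_div, add_zero]
      rw [hα, ← HahnSeries.leadingCoeff_eq]
      exact hlc
    set a : ℕ → L := mahlerSeq b hb c with ha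
    set V : HahnSeries ℚ L := hahnOfSeq β Q hQ a with hV
    have hVc : ∀ n : ℕ, V.coeff (β + (n : ℚ) / Q) = a n := fun n => hahnOfSeq_coeff β Q hQ a n
    have hVne : ∀ e : ℚ, (∀ n : ℕ, e ≠ β + (n : ℚ) / Q) → V.coeff e = 0 :=
      fun e he => hahnOfSeq_coeff_ne β Q hQ a he
    have hsupp_V : ∀ e : ℚ, V.coeff e ≠ 0 → ∃ n : ℕ, e = β + (n : ℚ) / Q := by
      intro e he
      by_contra hcon
      push_neg at hcon
      exact he (hVne e hcon)
    have hVβ : V.coeff β = 1 := by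
      have h := hVc 0
      simp only [Nat.cast_zero, zero_div, add_zero, ha, mahlerSeq_zero] at h
      exact h
    have hV0 : V ≠ 0 := by
      intro h
      rw [h] at hVβ
      simp at hVβ
    have hVord : V.order = β := by
      apply order_eq_of_coeffs
      · rw [hVβ]; exact one_ne_zero
      · intro e he
        apply hVne
        intro n hn
        have h1 : (0 : ℚ) ≤ (n : ℚ) / Q := by positivity
        rw [hn] at he
        linarith
    have hVlc : V.leadingCoeff = 1 := by
      rw [HahnSeries.leadingCoeff_eq, hVord, hVβ]
    have hmain : mahlerHahn L b hb0 V = u * V := by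
      ext e
      rw [mahler_coeff]
      by_cases hT : ∃ n : ℕ, e = α + β + (n : ℚ) / Q
      · obtain ⟨n, rfl⟩ := hT
        have heb : (α + β + (n : ℚ) / Q) / b = β + ((n : ℚ) / Q) / b := by
          rw [hαβ]
          field_simp
        have hLHS : V.coeff ((α + β + (n : ℚ) / Q) / b) = (if b ∣ n then a (n / b) else 0) := by
          by_cases hd : b ∣ n
          · obtain ⟨m, rfl⟩ := hd
            rw [if_pos ⟨m, rfl⟩]
            have h1 : (α + β + ((b * m : ℕ) : ℚ) / Q) / b = β + (m : ℚ) / Q := by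
              rw [hαβ]
              push_cast
              field_simp
            rw [h1, hVc m]
            congr 1
            exact (Nat.mul_div_cancel_left m (by omega)).symm
          · rw [if_neg hd]
            apply hVne
            intro k hk
            apply hd
            rw [heb] at hk
            have h3 : ((n : ℚ) / Q) / b = (k : ℚ) / Q := by linarith
            have h2 : (n : ℚ) = (b : ℚ) * k := by
              field_simp at h3
              have h3' : (n : ℚ) * Q = ((b : ℚ) * k) * Q := by rw [h3]
              exact mul_right_cancel₀ hQ0 h3'
            have h4 : n = b * k := by exact_mod_cast h2
            exact ⟨k, h4⟩
        rw [hLHS]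
        have hRHS : (u * V).coeff (α + β + (n : ℚ) / Q)
            = ∑ k ∈ Finset.range (n + 1), c (n - k) * a k := by
          classical
          rw [HahnSeries.coeff_mul]
          set F : ℕ → ℚ × ℚ := fun k => (α + (((n - k : ℕ)) : ℚ) / Q, β + (k : ℚ) / Q) with hF
          have hFinj : ∀ x ∈ Finset.range (n + 1), ∀ y ∈ Finset.range (n + 1), F x = F y → x = y := by
            intro x _ y _ hxy
            have h2 := congrArg Prod.snd hxy
            simp only [hF] at h2
            have h3 : (x : ℚ) / Q = (y : ℚ) / Q := by linarith
            field_simp at h3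
            exact_mod_cast h3
          have hsub : Finset.antidiagonal u.isPWO_support V.isPWO_support (α + β + (n : ℚ) / Q)
              ⊆ (Finset.range (n + 1)).image F := by
            intro p hp
            rw [Finset.mem_antidiagonal] at hp
            obtain ⟨n1, hn1⟩ := hsupp_u p.1 (by rw [← HahnSeries.mem_support]; exact hp.1)
            obtain ⟨k, hk⟩ := hsupp_V p.2 (by rw [← HahnSeries.mem_support]; exact hp.2.1)
            have hsum : n1 + k = n := by
              have h5 := hp.2.2
              rw [hn1, hk] at h5
              have h6 : (n1 : ℚ) / Q + (k : ℚ) / Q = (n : ℚ) / Q := by linarith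
              have h7 : (n1 : ℚ) + k = n := by
                field_simp at h6
                exact_mod_cast h6
              exact_mod_cast h7
            rw [Finset.mem_image]
            refine ⟨k, Finset.mem_range.2 (by omega), ?_⟩
            have hn1k : (((n - k : ℕ)) : ℚ) = (n1 : ℚ) := by
              have h8 : n - k = n1 := by omega
              rw [h8]
            have hfst : (F k).1 = p.1 := by
              simp only [hF]
              rw [hn1k]
              exact hn1.symm
            have hsnd : (F k).2 = p.2 := by
              simp only [hF]
              exact hk.symm
            exact Prod.ext hfst hsnd
          rw [Finset.sum_subset hsub ?_]
          · rw [Finset.sum_image hFinj]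
            apply Finset.sum_congr rfl
            intro k _
            simp only [hF]
            rw [hVc k]
          · intro p hpi hpa
            obtain ⟨k, hkr, rfl⟩ := Finset.mem_image.1 hpi
            by_contra hne
            apply hpa
            rw [Finset.mem_antidiagonal]
            refine ⟨?_, ?_, ?_⟩
            · rw [HahnSeries.mem_support]
              exact left_ne_zero_of_mul hne
            · rw [HahnSeries.mem_support]
              exact right_ne_zero_of_mul hne
            · have hkn : k ≤ n := by
                have := Finset.mem_range.1 hkr
                omega
              simp only [hF]
              rw [Nat.cast_sub hkn]
              field_simp
              ring
        rw [hRHS]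
        exact mahlerSeq_spec b hb c hc0 n
      · have hL : V.coeff (e / b) = 0 := by
          apply hVne
          intro k hk
          apply hT
          refine ⟨b * k, ?_⟩
          have h1 : e = (b : ℚ) * (β + (k : ℚ) / Q) := by
            rw [← hk]
            field_simp
          rw [h1, hαβ]
          push_cast
          ring
        rw [hL, HahnSeries.coeff_mul]
        symm
        apply Finset.sum_eq_zero
        intro p hp
        exfalso
        rw [Finset.mem_antidiagonal] at hp
        obtain ⟨n1, hn1⟩ := hsupp_u p.1 (by rw [← HahnSeries.mem_support]; exact hp.1)
        obtain ⟨k, hk⟩ := hsupp_V p.2 (by rw [← HahnSeries.mem_support]; exact hp.2.1)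
        apply hT
        refine ⟨n1 + k, ?_⟩
        rw [← hp.2.2, hn1, hk]
        push_cast
        ring
    have hspan : ∀ w : HahnSeries ℚ L, mahlerHahn L b hb0 w = u * w → ∃ cc : L, w = cc • V := by
      intro w hweq
      by_cases hw0 : w = 0
      · exact ⟨0, by simp [hw0]⟩
      · refine ⟨w.leadingCoeff, ?_⟩
        by_contra hne
        set d := w - w.leadingCoeff • V with hd
        have hd0 : d ≠ 0 := by
          intro h
          apply hne
          rw [← sub_eq_zero]
          exact h
        have hdeq : mahlerHahn L b hb0 d = u * d := by
          rw [hd, map_sub, mahler_smul, hweq, hmain]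
          simp only [← HahnSeries.C_mul_eq_smul]
          ring
        have hdord : d.order = β := (sol_order hb hu hd0 hdeq).1
        have hword : w.order = β := (sol_order hb hu hw0 hweq).1
        have hdβ : d.coeff β = 0 := by
          rw [hd, HahnSeries.coeff_sub, HahnSeries.coeff_smul, hVβ, smul_eq_mul, mul_one,
            ← hword, ← HahnSeries.leadingCoeff_eq, sub_self]
        exact (mt HahnSeries.coeff_order_eq_zero.mp hd0) (by rw [hdord]; exact hdβ)
    refine ⟨V, ?_, hmain, hVord, hVlc, ?_, fun w _ hweq => hspan w hweq⟩
    · refine ⟨Q, hQ, ?_⟩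
      intro e he
      rw [HahnSeries.mem_support] at he
      obtain ⟨n, rfl⟩ := hsupp_V e he
      refine ⟨M0 + n, ?_⟩
      rw [hM0]
      push_cast
      field_simp
    · intro w _ hweq hword hwlc
      obtain ⟨cc, rfl⟩ := hspan w hweq
      have h1 : (cc • V).coeff β = cc := by
        rw [HahnSeries.coeff_smul, hVβ, smul_eq_mul, mul_one]
      rw [HahnSeries.leadingCoeff_eq, hword] at hwlc
      rw [h1] at hwlc
      rw [hwlc, one_smul]
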